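/- arXiv:2309.15007 — 2 statements merged into one kernel-verified Lean document; each statement's English description precedes it below -/
import Mathlib

section
/- Let c be a nonzero integer and let d ≥ 2 be an integer. If m is a natural number with m > 2·|c|, then there is no integer x satisfying c·(2m+1)! = 2^m · m! · x^d. -/
/-- Let `c` be a nonzero integer and `d ≥ 2` an integer. If `m`
is a natural number with `m > 2·|c|`, then there is no integer `x` with
`c·(2m+1)! = 2^m · m! · x^d`. -/
theorem stmt_16 (c : ℤ) (hc : c ≠ 0) (d : ℕ) (hd : 2 ≤ d) (m : ℕ)
    (hm : 2 * c.natAbs < m) :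
    ¬ ∃ x : ℤ, c * (Nat.factorial (2 * m + 1) : ℤ)
      = 2 ^ m * (Nat.factorial m : ℤ) * x ^ d := by
  rintro ⟨x, hx⟩
  have hc1 : 1 ≤ c.natAbs := Int.natAbs_pos.mpr hc
  have hm3 : 3 ≤ m := by omega
  -- Bertrand: prime p with m+1 < p ≤ 2m+2
  obtain ⟨p, hp, hp1, hp2⟩ := Nat.exists_prime_lt_and_le_two_mul (m + 1) (by omega)
  have hpodd : p ≠ 2 := by omega
  have hple : p ≤ 2 * m + 1 := by
    rcases Nat.lt_or_ge p (2 * (m + 1)) with h | h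
    · omega
    · exfalso
      have heq : p = 2 * (m + 1) := le_antisymm hp2 h
      have := (Nat.Prime.even_iff hp).mp ⟨m + 1, by omega⟩
      omega
  -- p divides (2m+1)!
  have hpdvdF : p ∣ Nat.factorial (2 * m + 1) := Nat.dvd_factorial hp.pos hple
  -- p² does not divide (2m+1)!
  have hlog : Nat.log p (2 * m + 1) < 2 := by
    rw [Nat.log_lt_iff_lt_pow hp.one_lt (by omega)]
    have : (m + 2) * (m + 2) ≤ p ^ 2 := by
      rw [pow_two]; exact Nat.mul_le_mul hp1 hp1
    nlinarith
  have hp2ndvd : ¬ p ^ 2 ∣ Nat.factorial (2 * m + 1) := by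
    rw [Nat.Prime.pow_dvd_factorial_iff hp hlog]
    have : (2 * m + 1) / p < 2 := Nat.div_lt_of_lt_mul (by omega)
    rw [show Finset.Ico 1 2 = {1} from rfl, Finset.sum_singleton, pow_one]
    omega
  -- p doesn't divide c
  have hpc : ¬ (p : ℤ) ∣ c := by
    intro h
    have h2 : p ∣ c.natAbs := by
      have := Int.natAbs_dvd_natAbs.mpr h
      simpa using this
    have := Nat.le_of_dvd (by omega) h2
    omega
  -- p doesn't divide m! or 2
  have hpm : ¬ (p : ℤ) ∣ (Nat.factorial m : ℤ) := by
    rw [Int.natCast_dvd_natCast]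
    intro h
    exact absurd ((Nat.Prime.dvd_factorial hp).mp h) (by omega)
  have hpI : Prime (p : ℤ) := Nat.prime_iff_prime_int.mp hp
  have hp2' : ¬ (p : ℤ) ∣ 2 ^ m := by
    intro h
    have h2 := hpI.dvd_of_dvd_pow h
    have h3 : p ∣ 2 := by exact_mod_cast h2
    exact hpodd ((Nat.prime_dvd_prime_iff_eq hp Nat.prime_two).mp h3)
  -- p divides LHS
  have hdvdL : (p : ℤ) ∣ c * (Nat.factorial (2 * m + 1) : ℤ) :=
    Dvd.dvd.mul_left (Int.natCast_dvd_natCast.mpr hpdvdF) c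
  rw [hx] at hdvdL
  have hpx : (p : ℤ) ∣ x := by
    rcases hpI.dvd_mul.mp hdvdL with h | h
    · rcases hpI.dvd_mul.mp h with h | h
      · exact absurd h hp2'
      · exact absurd h hpm
    · exact hpI.dvd_of_dvd_pow h
  -- then p² divides RHS, hence LHS
  have hp2x : (p : ℤ) ^ 2 ∣ x ^ d := by
    calc (p : ℤ) ^ 2 ∣ x ^ 2 := pow_dvd_pow_of_dvd hpx 2
    _ ∣ x ^ d := pow_dvd_pow x hd
  have hfin : (p : ℤ) ^ 2 ∣ c * (Nat.factorial (2 * m + 1) : ℤ) := by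
    rw [hx]; exact Dvd.dvd.mul_left hp2x _
  -- move to ℕ
  have hfinN : p ^ 2 ∣ c.natAbs * Nat.factorial (2 * m + 1) := by
    have := Int.natAbs_dvd_natAbs.mpr hfin
    simpa [Int.natAbs_mul, Int.natAbs_pow] using this
  have hcop : Nat.Coprime (p ^ 2) c.natAbs := by
    apply Nat.Coprime.pow_left
    exact (hp.coprime_iff_not_dvd).mpr fun h => by
      have := Nat.le_of_dvd (by omega) h; omega
  have : p ^ 2 ∣ Nat.factorial (2 * m + 1) :=
    (Nat.Coprime.dvd_of_dvd_mul_left hcop) hfinN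
  exact hp2ndvd this
end

section
/- There exists a natural number M such that for all natural numbers m ≥ M, the product of all primes p satisfying m/2 < p ≤ m is strictly greater than 2^{m/2} + 1. -/
open Real Finset ArithmeticFunction



noncomputable def psi (n : ℕ) : ℝ := ∑ d ∈ Finset.Ioc 0 n, Λ d

noncomputable def T (n : ℕ) : ℝ := Real.log (Nat.factorial n)

theorem T_eq (n : ℕ) : T n = ∑ d ∈ Finset.Ioc 0 n, (n / d : ℕ) * Λ d := by
  have h1 : T n = ∑ k ∈ Finset.Ioc 0 n, Real.log k := by
    rw [T, ← Finset.prod_Ico_id_eq_factorial]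
    have : Finset.Ico 1 (n+1) = Finset.Ioc 0 n := by ext x; simp [Nat.lt_succ_iff]; omega
    rw [this]
    push_cast
    rw [Real.log_prod]
    intro k hk
    have := (Finset.mem_Ioc.mp hk).1
    positivity
  rw [h1]
  have h2 : ∀ k ∈ Finset.Ioc 0 n, Real.log k = ∑ d ∈ Finset.Ioc 0 n, if d ∣ k then Λ d else 0 := by
    intro k hk
    obtain ⟨hk0, hkn⟩ := Finset.mem_Ioc.mp hk
    rw [← ArithmeticFunction.vonMangoldt_sum (n := k), ← Finset.sum_filter]
    congr 1
    ext d
    simp only [Nat.mem_divisors, Finset.mem_filter, Finset.mem_Ioc]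
    constructor
    · rintro ⟨hd, -⟩
      exact ⟨⟨Nat.pos_of_dvd_of_pos hd hk0, (Nat.le_of_dvd hk0 hd).trans hkn⟩, hd⟩
    · rintro ⟨-, hd⟩
      exact ⟨hd, hk0.ne'⟩
  rw [Finset.sum_congr rfl h2, Finset.sum_comm]
  refine Finset.sum_congr rfl fun d hd => ?_
  rw [← Finset.sum_filter, Finset.sum_const, Nat.Ioc_filter_dvd_card_eq_div, nsmul_eq_mul]



def eW (q : ℕ) : ℤ := (q : ℤ) - (q / 2 : ℕ) - (q / 3 : ℕ) - (q / 5 : ℕ) + (q / 30 : ℕ)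

theorem eW_period (q : ℕ) : eW (q + 30) = eW q := by
  unfold eW
  have h2 : (q + 30) / 2 = q / 2 + 15 := by omega
  have h3 : (q + 30) / 3 = q / 3 + 10 := by omega
  have h5 : (q + 30) / 5 = q / 5 + 6 := by omega
  have h30 : (q + 30) / 30 = q / 30 + 1 := by omega
  rw [h2, h3, h5, h30]; push_cast; ring

theorem eW_bounds (q : ℕ) : 0 ≤ eW q ∧ eW q ≤ 1 := by
  induction q using Nat.strong_induction_on with
  | _ q ih =>
    rcases lt_or_ge q 30 with h | h
    · clear ih
      have : ∀ q < 30, 0 ≤ eW q ∧ eW q ≤ 1 := by decide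
      exact this q h
    · obtain ⟨r, rfl⟩ : ∃ r, q = r + 30 := ⟨q - 30, by omega⟩
      rw [eW_period]; exact ih r (by omega)

theorem eW_one {q : ℕ} (h1 : 1 ≤ q) (h5 : q ≤ 5) : eW q = 1 := by
  interval_cases q <;> decide




noncomputable def chebE (n : ℕ) : ℝ := T n - T (n / 2) - T (n / 3) - T (n / 5) + T (n / 30)

theorem T_div (n k : ℕ) (hk : 0 < k) :
    T (n / k) = ∑ d ∈ Finset.Ioc 0 n, ((n / d / k : ℕ) : ℝ) * Λ d := by
  rw [T_eq]
  apply Finset.sum_subset_zero_on_sdiff (Finset.Ioc_subset_Ioc le_rfl (Nat.div_le_self n k))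
  · intro d hd
    rw [Finset.mem_sdiff] at hd
    obtain ⟨hd, hnd⟩ := hd
    have h1 : n / k < d := by
      simp only [Finset.mem_Ioc] at hd hnd
      omega
    have : n / d / k = 0 := by
      rw [Nat.div_div_eq_div_mul]
      exact Nat.div_eq_of_lt ((Nat.div_lt_iff_lt_mul hk).mp h1)
    rw [this]; simp
  · intro d hd
    congr 2
    rw [Nat.div_div_eq_div_mul, Nat.div_div_eq_div_mul, Nat.mul_comm]

theorem chebE_eq (n : ℕ) :
    chebE n = ∑ d ∈ Finset.Ioc 0 n, ((eW (n / d) : ℤ) : ℝ) * Λ d := by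
  unfold chebE
  rw [T_eq, T_div n 2 (by norm_num), T_div n 3 (by norm_num), T_div n 5 (by norm_num),
    T_div n 30 (by norm_num), ← Finset.sum_sub_distrib, ← Finset.sum_sub_distrib,
    ← Finset.sum_sub_distrib, ← Finset.sum_add_distrib]
  refine Finset.sum_congr rfl fun d hd => ?_
  simp only [eW, Int.cast_sub, Int.cast_add, Int.cast_natCast]; ring




theorem log_succ_sub_log_le (m : ℕ) (hm : 1 ≤ m) :
    (m : ℝ) * (Real.log (m+1) - Real.log m) ≤ 1 := by
  have hm0 : (0:ℝ) < m := by exact_mod_cast hm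
  have h1 : Real.log ((m+1)/m) ≤ (m+1)/(m:ℝ) - 1 :=
    Real.log_le_sub_one_of_pos (by positivity)
  rw [Real.log_div (by positivity) (by positivity)] at h1
  have h2 : ((m:ℝ)+1)/m - 1 = 1/m := by field_simp; ring
  rw [h2] at h1
  calc (m : ℝ) * (Real.log (m+1) - Real.log m) ≤ (m:ℝ) * (1/m) := by
        apply mul_le_mul_of_nonneg_left _ hm0.le
        exact_mod_cast h1
    _ = 1 := by field_simp

theorem one_le_succ_mul_log (m : ℕ) (hm : 1 ≤ m) :
    1 ≤ ((m:ℝ)+1) * (Real.log (m+1) - Real.log m) := by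
  have hm0 : (0:ℝ) < m := by exact_mod_cast hm
  have h1 : Real.log ((m:ℝ)/(m+1)) ≤ (m:ℝ)/((m:ℝ)+1) - 1 :=
    Real.log_le_sub_one_of_pos (by positivity)
  rw [Real.log_div (by positivity) (by positivity)] at h1
  have h2 : (m:ℝ)/((m:ℝ)+1) - 1 = -(1/((m:ℝ)+1)) := by field_simp; ring
  rw [h2] at h1
  have h3 : 1/((m:ℝ)+1) ≤ Real.log ((m:ℝ)+1) - Real.log m := by linarith
  calc (1:ℝ) = ((m:ℝ)+1) * (1/((m:ℝ)+1)) := by field_simp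
    _ ≤ ((m:ℝ)+1) * (Real.log (m+1) - Real.log m) := by
        apply mul_le_mul_of_nonneg_left h3 (by positivity)

theorem T_succ (m : ℕ) : T (m+1) = T m + Real.log (m+1) := by
  unfold T
  rw [Nat.factorial_succ]
  push_cast
  rw [Real.log_mul (by positivity) (by exact_mod_cast Nat.cast_ne_zero.mpr m.factorial_ne_zero)]
  ring

theorem stirling (n : ℕ) (hn : 1 ≤ n) :
    (n:ℝ) * Real.log n - n + 1 ≤ T n ∧ T n ≤ (n:ℝ) * Real.log n - n + 1 + Real.log n := by
  induction n with
  | zero => omega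
  | succ m ih =>
    rcases Nat.lt_or_ge m 1 with hm | hm
    · interval_cases m
      simp [T, Nat.factorial]
    · obtain ⟨ih1, ih2⟩ := ih hm
      rw [T_succ]
      have hb := log_succ_sub_log_le m hm
      have hc := one_le_succ_mul_log m hm
      push_cast
      constructor <;> nlinarith [Real.log_nonneg (by exact_mod_cast hm : (1:ℝ) ≤ (m:ℝ))]



noncomputable def fS (x : ℝ) : ℝ := x * Real.log x - x + 1

theorem fS_mono {y x : ℝ} (hy : 1 ≤ y) (hyx : y ≤ x) : fS y ≤ fS x := by
  have hy0 : (0:ℝ) < y := by linarith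
  have hx0 : (0:ℝ) < x := by linarith
  have h1 : Real.log (y/x) ≤ y/x - 1 := Real.log_le_sub_one_of_pos (by positivity)
  rw [Real.log_div (by positivity) (by positivity)] at h1
  have h2 : x * (Real.log x - Real.log y) ≥ x - y := by
    have := mul_le_mul_of_nonneg_left h1 hx0.le
    have hxx : x * (y/x - 1) = y - x := by field_simp
    nlinarith
  have h3 : 0 ≤ Real.log y := Real.log_nonneg hy
  unfold fS
  nlinarith

theorem fS_diff_le {y x : ℝ} (hy : 1 ≤ y) (hyx : y ≤ x) (hx1 : x ≤ y + 1) :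
    fS x - fS y ≤ Real.log x + 1 := by
  have hy0 : (0:ℝ) < y := by linarith
  have hx0 : (0:ℝ) < x := by linarith
  have h1 : Real.log (x/y) ≤ x/y - 1 := Real.log_le_sub_one_of_pos (by positivity)
  rw [Real.log_div (by positivity) (by positivity)] at h1
  have h2 : y * (Real.log x - Real.log y) ≤ x - y := by
    have h4 := mul_le_mul_of_nonneg_left h1 hy0.le
    have h5 : y * (x/y - 1) = x - y := by field_simp
    linarith
  have h3 : 0 ≤ Real.log x := Real.log_nonneg (by linarith)
  unfold fS
  nlinarith

/-- bounds for `T (n/k)` in terms of `fS ((n:ℝ)/k)` -/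
theorem T_div_bounds (n k : ℕ) (hk : 0 < k) (hn : 2 * k ≤ n) :
    fS ((n:ℝ)/k) - (Real.log n + 1) ≤ T (n / k) ∧
    T (n / k) ≤ fS ((n:ℝ)/k) + Real.log n := by
  set b : ℕ := n / k with hb
  have hb1 : 1 ≤ b := by
    rw [hb]
    exact Nat.one_le_div_iff hk |>.mpr (by omega)
  have hbr1 : (1:ℝ) ≤ (b:ℝ) := by exact_mod_cast hb1
  have hk0 : (0:ℝ) < (k:ℝ) := by exact_mod_cast hk
  have hble : (b:ℝ) ≤ (n:ℝ)/k := by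
    rw [hb]
    exact Nat.cast_div_le
  have hup : (n:ℝ)/k ≤ (b:ℝ) + 1 := by
    rw [div_le_iff₀ hk0]
    have : n < (b + 1) * k := by
      have h6 := Nat.div_add_mod n k
      have h7 := Nat.mod_lt n hk
      have h8 : (b + 1) * k = k * (n / k) + k := by rw [hb]; ring
      omega
    exact_mod_cast this.le
  have hs := stirling b hb1
  have hlogbn : Real.log b ≤ Real.log n := by
    apply Real.log_le_log (by positivity)
    exact_mod_cast Nat.div_le_self n k
  have h1 : fS (b:ℝ) ≤ fS ((n:ℝ)/k) := fS_mono hbr1 hble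
  have h2 : fS ((n:ℝ)/k) - fS (b:ℝ) ≤ Real.log ((n:ℝ)/k) + 1 :=
    fS_diff_le hbr1 hble hup
  have hn0 : (0:ℝ) < (n:ℝ) := by
    have : 0 < n := by omega
    exact_mod_cast this
  have h3 : Real.log ((n:ℝ)/k) ≤ Real.log n := by
    apply Real.log_le_log (by positivity)
    calc (n:ℝ)/k ≤ (n:ℝ)/1 := by
          apply div_le_div_of_nonneg_left (by positivity) (by norm_num)
          exact_mod_cast hk
      _ = n := by ring
  constructor
  · have := hs.1
    unfold fS at *
    linarith
  · have := hs.2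
    unfold fS at *
    linarith

noncomputable def Ach : ℝ := (7/15)*Real.log 2 + (3/10)*Real.log 3 + (1/6)*Real.log 5

theorem fS_identity (n : ℕ) (hn : 1 ≤ n) :
    fS (n:ℝ) - fS ((n:ℝ)/2) - fS ((n:ℝ)/3) - fS ((n:ℝ)/5) + fS ((n:ℝ)/30)
      = Ach * n - 1 := by
  have hn0 : (0:ℝ) < n := by exact_mod_cast hn
  have l2 : Real.log ((n:ℝ)/2) = Real.log n - Real.log 2 := Real.log_div hn0.ne' two_ne_zero
  have l3 : Real.log ((n:ℝ)/3) = Real.log n - Real.log 3 := Real.log_div hn0.ne' (by norm_num)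
  have l5 : Real.log ((n:ℝ)/5) = Real.log n - Real.log 5 := Real.log_div hn0.ne' (by norm_num)
  have l30 : Real.log ((n:ℝ)/30) = Real.log n - (Real.log 2 + Real.log 3 + Real.log 5) := by
    rw [Real.log_div hn0.ne' (by norm_num)]
    rw [show (30:ℝ) = 2*3*5 by norm_num, Real.log_mul (by norm_num) (by norm_num),
      Real.log_mul (by norm_num) (by norm_num)]
  unfold fS Ach
  rw [l2, l3, l5, l30]
  ring

theorem chebE_bounds (n : ℕ) (hn : 60 ≤ n) :
    Ach * n - (5*Real.log n + 5) ≤ chebE n ∧ chebE n ≤ Ach * n + (5*Real.log n + 5) := by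
  have h2 := T_div_bounds n 2 (by norm_num) (by omega)
  have h3 := T_div_bounds n 3 (by norm_num) (by omega)
  have h5 := T_div_bounds n 5 (by norm_num) (by omega)
  have h30 := T_div_bounds n 30 (by norm_num) (by omega)
  have hs := stirling n (by omega)
  have hid := fS_identity n (by omega)
  have hfn : fS (n:ℝ) = (n:ℝ) * Real.log n - n + 1 := rfl
  unfold chebE
  constructor <;> [skip; skip] <;>
  · obtain ⟨a2, b2⟩ := h2; obtain ⟨a3, b3⟩ := h3; obtain ⟨a5, b5⟩ := h5
    obtain ⟨a30, b30⟩ := h30; obtain ⟨s1, s2⟩ := hs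
    rw [← hfn] at s1 s2
    linarith



theorem chebE_le_psi (n : ℕ) : chebE n ≤ psi n := by
  rw [chebE_eq, psi]
  apply Finset.sum_le_sum
  intro d hd
  have h1 := (eW_bounds (n / d)).2
  have h2 : ((eW (n/d) : ℤ) : ℝ) ≤ 1 := by exact_mod_cast h1
  nlinarith [ArithmeticFunction.vonMangoldt_nonneg (n := d)]

theorem psi_sub_le_chebE (n : ℕ) : psi n - psi (n / 6) ≤ chebE n := by
  rw [chebE_eq]
  have hsplit : Finset.Ioc 0 n = Finset.Ioc 0 (n/6) ∪ Finset.Ioc (n/6) n :=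
    (Finset.Ioc_union_Ioc_eq_Ioc (Nat.zero_le _) (Nat.div_le_self n 6)).symm
  have hdisj : Disjoint (Finset.Ioc 0 (n/6)) (Finset.Ioc (n/6) n) := by
    simp [Finset.disjoint_left, Finset.mem_Ioc]
    intro a h1 h2 h3
    omega
  rw [hsplit, Finset.sum_union hdisj]
  have e1 : 0 ≤ ∑ d ∈ Finset.Ioc 0 (n/6), ((eW (n / d) : ℤ) : ℝ) * Λ d := by
    apply Finset.sum_nonneg
    intro d hd
    have h1 := (eW_bounds (n / d)).1
    have h2 : (0:ℝ) ≤ ((eW (n/d) : ℤ) : ℝ) := by exact_mod_cast h1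
    exact mul_nonneg h2 ArithmeticFunction.vonMangoldt_nonneg
  have e2 : ∑ d ∈ Finset.Ioc (n/6) n, ((eW (n / d) : ℤ) : ℝ) * Λ d
      = ∑ d ∈ Finset.Ioc (n/6) n, Λ d := by
    apply Finset.sum_congr rfl
    intro d hd
    obtain ⟨hd1, hd2⟩ := Finset.mem_Ioc.mp hd
    have hd0 : 0 < d := by omega
    have hq1 : 1 ≤ n / d := Nat.one_le_div_iff hd0 |>.mpr hd2
    have hq5 : n / d ≤ 5 := by
      by_contra h
      push_neg at h
      have h6 : 6 * d ≤ (n/d) * d := Nat.mul_le_mul_right d h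
      have h7 : (n/d) * d ≤ n := Nat.div_mul_le_self n d
      have h8 : d ≤ n / 6 := Nat.le_div_iff_mul_le (by norm_num) |>.mpr (by omega)
      omega
    rw [eW_one hq1 hq5]
    norm_num
  rw [e2]
  have e3 : 0 ≤ ∑ d ∈ Finset.Ioc 0 (n/6), Λ d :=
    Finset.sum_nonneg fun d _ => ArithmeticFunction.vonMangoldt_nonneg
  unfold psi
  rw [hsplit, Finset.sum_union hdisj]
  linarith

theorem psi_le_nlogn (n : ℕ) : psi n ≤ (n:ℝ) * Real.log n := by
  unfold psi
  calc ∑ d ∈ Finset.Ioc 0 n, Λ d ≤ ∑ d ∈ Finset.Ioc 0 n, Real.log n := by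
        apply Finset.sum_le_sum
        intro d hd
        obtain ⟨h1, h2⟩ := Finset.mem_Ioc.mp hd
        calc Λ d ≤ Real.log d := ArithmeticFunction.vonMangoldt_le_log
          _ ≤ Real.log n := Real.log_le_log (by exact_mod_cast h1) (by exact_mod_cast h2)
    _ = (n:ℝ) * Real.log n := by
        rw [Finset.sum_const, Nat.card_Ioc, nsmul_eq_mul]
        norm_num

theorem Ach_nonneg : 0 ≤ Ach := by
  unfold Ach
  have h2 : 0 ≤ Real.log 2 := Real.log_nonneg (by norm_num)
  have h3 : 0 ≤ Real.log 3 := Real.log_nonneg (by norm_num)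
  have h5 : 0 ≤ Real.log 5 := Real.log_nonneg (by norm_num)
  positivity

theorem one_le_log_six : 1 ≤ Real.log 6 := by
  rw [Real.le_log_iff_exp_le (by norm_num)]
  calc Real.exp 1 ≤ 2.7182818286 := Real.exp_one_lt_d9.le
    _ ≤ 6 := by norm_num

theorem psi_upper : ∀ n : ℕ, psi n ≤ (6/5) * Ach * n + 300 * (Real.log n + 1)^2 := by
  intro n
  induction n using Nat.strong_induction_on with
  | _ n ih =>
    rcases lt_or_ge n 60 with h | h
    · -- base case
      rcases Nat.eq_zero_or_pos n with rfl | hn0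
      · have hz : psi 0 = 0 := by simp [psi]
        have hA := Ach_nonneg
        rw [hz]
        push_cast
        nlinarith
      have hlog : 0 ≤ Real.log n := Real.log_nonneg (by exact_mod_cast hn0)
      have h1 : psi n ≤ (n:ℝ) * Real.log n := psi_le_nlogn n
      have h2 : (n:ℝ) ≤ 59 := by exact_mod_cast Nat.lt_succ_iff.mp (by omega : n < 60)
      have h3 : (0:ℝ) ≤ (6/5) * Ach * n := by
        have := Ach_nonneg; positivity
      nlinarith
    · -- inductive step
      have hb : n / 6 < n := Nat.div_lt_self (by omega) (by norm_num)
      have ih6 := ih (n/6) hb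
      have hE := (chebE_bounds n h).2
      have hP := psi_sub_le_chebE n
      have hcast : ((n/6 : ℕ) : ℝ) ≤ (n:ℝ)/6 := Nat.cast_div_le
      have hA := Ach_nonneg
      have hmul : (6/5) * Ach * ((n/6 : ℕ) : ℝ) ≤ (6/5) * Ach * ((n:ℝ)/6) := by
        apply mul_le_mul_of_nonneg_left hcast (by positivity)
      have hlogdiff : Real.log n - Real.log ((n/6:ℕ):ℝ) ≥ 1 := by
        have hb1 : 1 ≤ n / 6 := Nat.one_le_div_iff (by norm_num) |>.mpr (by omega)
        have hb1r : (1:ℝ) ≤ ((n/6:ℕ):ℝ) := by exact_mod_cast hb1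
        have h66 : 6 * (n/6) ≤ n := by omega
        have h66r : (6:ℝ) * ((n/6:ℕ):ℝ) ≤ (n:ℝ) := by exact_mod_cast h66
        have hlogmul : Real.log (6 * ((n/6:ℕ):ℝ)) = Real.log 6 + Real.log ((n/6:ℕ):ℝ) :=
          Real.log_mul (by norm_num) (by linarith)
        have := Real.log_le_log (by linarith : (0:ℝ) < 6 * ((n/6:ℕ):ℝ)) h66r
        have h6 := one_le_log_six
        linarith
      have hlogb0 : 0 ≤ Real.log ((n/6:ℕ):ℝ) := by
        rcases Nat.eq_zero_or_pos (n/6) with hz | hp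
        · rw [hz]; norm_num
        · exact Real.log_nonneg (by exact_mod_cast hp)
      have hlogn0 : 0 ≤ Real.log n := Real.log_nonneg (by
        have : (1:ℕ) ≤ n := by omega
        exact_mod_cast this)
      have hsq : 300 * ((Real.log ((n/6:ℕ):ℝ)) + 1)^2 + 5 * Real.log n + 5
          ≤ 300 * (Real.log n + 1)^2 := by
        nlinarith [sq_nonneg (Real.log n - Real.log ((n/6:ℕ):ℝ))]
      have hfin : ((n:ℝ)/6) * ((6/5) * Ach) + Ach * n = (6/5) * Ach * n := by ring
      nlinarith



theorem card_nonprime_pp (m : ℕ) :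
    ((Finset.Ioc 0 m).filter (fun d => ¬ d.Prime ∧ IsPrimePow d)).card
      ≤ Nat.sqrt m * Nat.log 2 m := by
  classical
  set F := (Finset.Ioc 0 m).filter (fun d => ¬ d.Prime ∧ IsPrimePow d) with hF
  set G := Finset.Icc 2 (Nat.sqrt m) ×ˢ Finset.Icc 2 (Nat.log 2 m) with hG
  have key : ∀ d ∈ F, ∃ p k : ℕ, p.Prime ∧ 2 ≤ k ∧ p ^ k = d := by
    intro d hd
    rw [hF, Finset.mem_filter] at hd
    obtain ⟨hmem, hnp, hpp⟩ := hd
    obtain ⟨p, k, hp, hk, rfl⟩ := hpp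
    have hp' : p.Prime := Nat.prime_iff.mpr hp
    refine ⟨p, k, hp', ?_, rfl⟩
    rcases Nat.lt_or_ge k 2 with h | h
    · have hk1 : k = 1 := by omega
      rw [hk1, pow_one] at hnp
      exact absurd hp' hnp
    · exact h
  have hmaps : ∀ d ∈ F, (d.minFac, d.factorization d.minFac) ∈ G := by
    intro d hd
    obtain ⟨p, k, hp, hk, rfl⟩ := key d hd
    have hpm : p ^ k ≤ m := by
      rw [hF, Finset.mem_filter, Finset.mem_Ioc] at hd
      exact hd.1.2
    rw [Nat.Prime.pow_minFac hp (by omega), hp.factorization_pow, Finsupp.single_eq_same]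
    rw [hG, Finset.mem_product, Finset.mem_Icc, Finset.mem_Icc]
    have hp2 : p * p ≤ m := by
      calc p * p = p ^ 2 := by ring
        _ ≤ p ^ k := Nat.pow_le_pow_right hp.one_lt.le hk
        _ ≤ m := hpm
    have h2k : 2 ^ k ≤ m := le_trans (Nat.pow_le_pow_left hp.two_le k) hpm
    have hm0 : m ≠ 0 := by
      intro h
      rw [h] at hpm
      exact absurd (Nat.le_zero.mp hpm) (pow_ne_zero k hp.pos.ne')
    exact ⟨⟨hp.two_le, Nat.le_sqrt.mpr hp2⟩,
      ⟨hk, (Nat.le_log_iff_pow_le (by norm_num) hm0).mpr h2k⟩⟩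
  have hinj : Set.InjOn (fun d : ℕ => (d.minFac, d.factorization d.minFac)) ↑F := by
    intro d1 hd1 d2 hd2 heq
    simp only [Finset.mem_coe] at hd1 hd2
    obtain ⟨p1, k1, hp1, hk1, rfl⟩ := key d1 hd1
    obtain ⟨p2, k2, hp2, hk2, rfl⟩ := key d2 hd2
    simp only [Nat.Prime.pow_minFac hp1 (by omega : k1 ≠ 0), hp1.factorization_pow,
      Finsupp.single_eq_same, Nat.Prime.pow_minFac hp2 (by omega : k2 ≠ 0),
      hp2.factorization_pow, Prod.mk.injEq] at heq
    rw [heq.1, heq.2]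
  calc F.card ≤ G.card := Finset.card_le_card_of_injOn _ hmaps hinj
    _ ≤ Nat.sqrt m * Nat.log 2 m := by
        rw [hG, Finset.card_product, Nat.card_Icc, Nat.card_Icc]
        apply Nat.mul_le_mul <;> omega



theorem prime_sum_lower (m : ℕ) (hm : 1 ≤ m) :
    psi m - psi (m/2) - (Nat.sqrt m * Nat.log 2 m : ℕ) * Real.log m
      ≤ ∑ p ∈ (Finset.range (m + 1)).filter (fun p => p.Prime ∧ m < 2 * p), Real.log p := by
  classical
  have hlogm : 0 ≤ Real.log m := Real.log_nonneg (by exact_mod_cast hm)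
  -- psi m - psi (m/2) = sum over Ioc (m/2) m
  have hsplit : Finset.Ioc 0 m = Finset.Ioc 0 (m/2) ∪ Finset.Ioc (m/2) m :=
    (Finset.Ioc_union_Ioc_eq_Ioc (Nat.zero_le _) (Nat.div_le_self m 2)).symm
  have hdisj : Disjoint (Finset.Ioc 0 (m/2)) (Finset.Ioc (m/2) m) := by
    simp [Finset.disjoint_left, Finset.mem_Ioc]
    intro a h1 h2 h3
    omega
  have h1 : psi m - psi (m/2) = ∑ d ∈ Finset.Ioc (m/2) m, Λ d := by
    unfold psi
    rw [hsplit, Finset.sum_union hdisj]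
    ring
  rw [h1]
  -- split into primes and non-primes
  rw [← Finset.sum_filter_add_sum_filter_not (Finset.Ioc (m/2) m) (fun d => d.Prime)]
  -- prime part equals the target sum
  have hprime : ∑ d ∈ (Finset.Ioc (m/2) m).filter (fun d => d.Prime), Λ d
      = ∑ p ∈ (Finset.range (m + 1)).filter (fun p => p.Prime ∧ m < 2 * p), Real.log p := by
    have hset : (Finset.Ioc (m/2) m).filter (fun d => d.Prime)
        = (Finset.range (m + 1)).filter (fun p => p.Prime ∧ m < 2 * p) := by
      ext p
      simp only [Finset.mem_filter, Finset.mem_Ioc, Finset.mem_range, Nat.lt_succ_iff]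
      constructor
      · rintro ⟨⟨hp1, hp2⟩, hp3⟩
        exact ⟨hp2, hp3, by omega⟩
      · rintro ⟨hp1, hp2, hp3⟩
        exact ⟨⟨by omega, hp1⟩, hp2⟩
    rw [hset]
    apply Finset.sum_congr rfl
    intro p hp
    rw [Finset.mem_filter] at hp
    exact ArithmeticFunction.vonMangoldt_apply_prime hp.2.1
  rw [hprime]
  -- non-prime part is small
  have hnp : ∑ d ∈ (Finset.Ioc (m/2) m).filter (fun d => ¬ d.Prime), Λ d
      ≤ (Nat.sqrt m * Nat.log 2 m : ℕ) * Real.log m := by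
    have hsub : ∑ d ∈ (Finset.Ioc (m/2) m).filter (fun d => ¬ d.Prime), Λ d
        ≤ ∑ d ∈ (Finset.Ioc 0 m).filter (fun d => ¬ d.Prime ∧ IsPrimePow d), Λ d := by
      rw [← Finset.sum_filter_add_sum_filter_not
        ((Finset.Ioc (m/2) m).filter (fun d => ¬ d.Prime)) (fun d => IsPrimePow d)]
      have hz : ∑ d ∈ ((Finset.Ioc (m/2) m).filter (fun d => ¬ d.Prime)).filter
          (fun d => ¬ IsPrimePow d), Λ d = 0 := by
        apply Finset.sum_eq_zero
        intro d hd
        simp only [Finset.mem_filter] at hd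
        exact ArithmeticFunction.vonMangoldt_eq_zero_iff.mpr hd.2
      rw [hz, add_zero]
      apply Finset.sum_le_sum_of_subset_of_nonneg
      · intro d hd
        simp only [Finset.mem_filter, Finset.mem_Ioc] at hd ⊢
        exact ⟨⟨by omega, hd.1.1.2⟩, hd.1.2, hd.2⟩
      · intro d _ _
        exact ArithmeticFunction.vonMangoldt_nonneg
    calc ∑ d ∈ (Finset.Ioc (m/2) m).filter (fun d => ¬ d.Prime), Λ d
        ≤ ∑ d ∈ (Finset.Ioc 0 m).filter (fun d => ¬ d.Prime ∧ IsPrimePow d), Λ d := hsub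
      _ ≤ ∑ d ∈ (Finset.Ioc 0 m).filter (fun d => ¬ d.Prime ∧ IsPrimePow d), Real.log m := by
          apply Finset.sum_le_sum
          intro d hd
          simp only [Finset.mem_filter, Finset.mem_Ioc] at hd
          calc Λ d ≤ Real.log d := ArithmeticFunction.vonMangoldt_le_log
            _ ≤ Real.log m := Real.log_le_log (by exact_mod_cast hd.1.1) (by exact_mod_cast hd.1.2)
      _ = ((Finset.Ioc 0 m).filter (fun d => ¬ d.Prime ∧ IsPrimePow d)).card * Real.log m := by
          rw [Finset.sum_const, nsmul_eq_mul]
      _ ≤ (Nat.sqrt m * Nat.log 2 m : ℕ) * Real.log m := by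
          apply mul_le_mul_of_nonneg_right _ hlogm
          exact_mod_cast card_nonprime_pp m
  linarith




theorem delta_bound : Real.log 2 / 2 + 1/100 ≤ (2/5) * Ach := by
  have hl2u : Real.log 2 < 0.6931471808 := Real.log_two_lt_d9
  have hl2l : 0.6931471803 < Real.log 2 := Real.log_two_gt_d9
  have h43 : Real.log (4/3) ≤ 1/3 := by
    calc Real.log (4/3) ≤ 4/3 - 1 := Real.log_le_sub_one_of_pos (by norm_num)
      _ = 1/3 := by norm_num
  have h3 : Real.log 3 = 2 * Real.log 2 - Real.log (4/3) := by
    rw [Real.log_div (by norm_num) (by norm_num), show (4:ℝ) = 2^2 by norm_num, Real.log_pow]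
    push_cast
    ring
  have h54 : (1:ℝ)/5 ≤ Real.log (5/4) := by
    have := Real.log_le_sub_one_of_pos (show (0:ℝ) < 4/5 by norm_num)
    have heq : Real.log ((4:ℝ)/5) = - Real.log (5/4) := by
      rw [← Real.log_inv]
      norm_num
    rw [heq] at this
    linarith
  have h5 : Real.log 5 = 2 * Real.log 2 + Real.log (5/4) := by
    rw [Real.log_div (by norm_num) (by norm_num), show (4:ℝ) = 2^2 by norm_num, Real.log_pow]
    push_cast
    ring
  unfold Ach
  rw [h3, h5]
  nlinarith



/-- purely polynomial endgame -/
theorem err_poly (y18 y14 y12 y34 x l s L : ℝ)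
    (h18_1 : 1 ≤ y18) (h34_1 : 1 ≤ y34)
    (hsq18 : y18^2 = y14) (h1214 : y12 * y14 = y34) (h341 : y34 * y14 = x)
    (h1834 : y18 ≤ y34) (h1434 : y14 ≤ y34) (hq : (10:ℝ)^7 ≤ y14)
    (hy120 : 0 ≤ y12) (hy140 : 0 ≤ y14) (hy340 : 0 ≤ y34)
    (hl0 : 0 ≤ l) (hl8 : l ≤ 8 * y18)
    (hs0 : 0 ≤ s) (hsy : s ≤ y12) (hL0 : 0 ≤ L) (hL2l : L ≤ 2 * l)
    (hlog2 : Real.log 2 < 0.6931471808) :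
    5*l + 5 + 300*(l + 1)^2 + (s * L) * l + Real.log 2 + 1 ≤ (1/100) * x := by
  have hlsq : l^2 ≤ 64 * y14 := by nlinarith
  have ht3 : (s * L) * l ≤ 128 * y34 := by
    calc (s * L) * l ≤ (y12 * (2*l)) * l := by
          apply mul_le_mul _ le_rfl hl0 (by positivity)
          exact mul_le_mul hsy hL2l hL0 hy120
      _ = 2 * (y12 * l^2) := by ring
      _ ≤ 2 * (y12 * (64 * y14)) := by nlinarith
      _ = 128 * (y12 * y14) := by ring
      _ = 128 * y34 := by rw [h1214]
  have ht2 : 300*(l + 1)^2 ≤ 24300 * y34 := by nlinarith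
  have ht1 : 5*l + 5 + Real.log 2 + 1 ≤ 50 * y34 := by nlinarith
  have hfin : 30000 * y34 * (10:ℝ)^7 ≤ 30000 * x := by nlinarith
  nlinarith

theorem err_small (m : ℕ) (hm : 10^28 ≤ m) :
    5*Real.log m + 5 + 300*(Real.log m + 1)^2
      + ((Nat.sqrt m * Nat.log 2 m : ℕ) : ℝ) * Real.log m + Real.log 2 + 1
      ≤ (1/100) * m := by
  have hm1 : (1:ℝ) ≤ (m:ℝ) := by
    have : (1:ℕ) ≤ m := le_trans (by norm_num) hm
    exact_mod_cast this
  have hx0 : (0:ℝ) < (m:ℝ) := by linarith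
  have hmx : (10:ℝ)^28 ≤ (m:ℝ) := by exact_mod_cast hm
  have hl0 : 0 ≤ Real.log m := Real.log_nonneg hm1
  have hl8 : Real.log m ≤ 8 * (m:ℝ) ^ ((1:ℝ)/8) := by
    have := Real.log_le_rpow_div hx0.le (show (0:ℝ) < 1/8 by norm_num)
    calc Real.log m ≤ (m:ℝ) ^ ((1:ℝ)/8) / (1/8) := this
      _ = 8 * (m:ℝ) ^ ((1:ℝ)/8) := by ring
  have hx18_1 : (1:ℝ) ≤ (m:ℝ) ^ ((1:ℝ)/8) := Real.one_le_rpow hm1 (by norm_num)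
  have hx34_1 : (1:ℝ) ≤ (m:ℝ) ^ ((3:ℝ)/4) := Real.one_le_rpow hm1 (by norm_num)
  have hsq18 : ((m:ℝ) ^ ((1:ℝ)/8))^2 = (m:ℝ) ^ ((1:ℝ)/4) := by
    rw [← Real.rpow_natCast ((m:ℝ) ^ ((1:ℝ)/8)) 2, ← Real.rpow_mul hx0.le]
    norm_num
  have h1214 : (m:ℝ) ^ ((1:ℝ)/2) * (m:ℝ) ^ ((1:ℝ)/4) = (m:ℝ) ^ ((3:ℝ)/4) := by
    rw [← Real.rpow_add hx0]
    norm_num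
  have h341 : (m:ℝ) ^ ((3:ℝ)/4) * (m:ℝ) ^ ((1:ℝ)/4) = (m:ℝ) := by
    rw [← Real.rpow_add hx0]
    norm_num
  have h1834 : (m:ℝ) ^ ((1:ℝ)/8) ≤ (m:ℝ) ^ ((3:ℝ)/4) :=
    Real.rpow_le_rpow_of_exponent_le hm1 (by norm_num)
  have h1434 : (m:ℝ) ^ ((1:ℝ)/4) ≤ (m:ℝ) ^ ((3:ℝ)/4) :=
    Real.rpow_le_rpow_of_exponent_le hm1 (by norm_num)
  have hq : (10:ℝ)^7 ≤ (m:ℝ) ^ ((1:ℝ)/4) := by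
    have h1 : ((10:ℝ)^28) ^ ((1:ℝ)/4) = 10^7 := by
      rw [show ((10:ℝ)^28) = ((10:ℝ)^7)^(4:ℕ) by norm_num,
        ← Real.rpow_natCast ((10:ℝ)^7) 4, ← Real.rpow_mul (by positivity)]
      norm_num
    rw [← h1]
    exact Real.rpow_le_rpow (by positivity) hmx (by norm_num)
  have hnatlog : ((Nat.log 2 m : ℕ) : ℝ) ≤ 2 * Real.log m := by
    have hmne : m ≠ 0 := by omega
    have h1 : (2:ℕ) ^ (Nat.log 2 m) ≤ m := Nat.pow_log_le_self 2 hmne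
    have h2 : ((2:ℝ)) ^ (Nat.log 2 m : ℕ) ≤ (m:ℝ) := by exact_mod_cast h1
    have h3 : Real.log ((2:ℝ) ^ (Nat.log 2 m : ℕ)) ≤ Real.log m :=
      Real.log_le_log (by positivity) h2
    rw [Real.log_pow] at h3
    have hl2 : (0.6931471803:ℝ) < Real.log 2 := Real.log_two_gt_d9
    nlinarith [(Nat.cast_nonneg (Nat.log 2 m) : (0:ℝ) ≤ (Nat.log 2 m : ℕ))]
  have hnsqrt : ((Nat.sqrt m : ℕ) : ℝ) ≤ (m:ℝ) ^ ((1:ℝ)/2) := by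
    rw [← Real.sqrt_eq_rpow]
    exact Real.nat_sqrt_le_real_sqrt
  have hcast : ((Nat.sqrt m * Nat.log 2 m : ℕ) : ℝ)
      = ((Nat.sqrt m : ℕ) : ℝ) * ((Nat.log 2 m : ℕ) : ℝ) := by push_cast; ring
  rw [hcast]
  exact err_poly _ _ _ _ _ _ _ _ hx18_1 hx34_1 hsq18 h1214 h341 h1834 h1434 hq
    (by positivity) (by positivity) (by positivity) hl0 hl8 (Nat.cast_nonneg _)
    hnsqrt (Nat.cast_nonneg _) hnatlog Real.log_two_lt_d9



/-- There is `M : ℕ` such that for all `m ≥ M`, the product of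
all primes `p` with `m/2 < p ≤ m` exceeds `2^{m/2} + 1`. -/
theorem stmt_17 :
    ∃ M : ℕ, ∀ m : ℕ, M ≤ m →
      (2 : ℝ) ^ ((m : ℝ) / 2) + 1 <
        ∏ p ∈ (Finset.range (m + 1)).filter (fun p => p.Prime ∧ m < 2 * p),
          (p : ℝ) := by
  refine ⟨10^28, fun m hm => ?_⟩
  have hm1 : 1 ≤ m := le_trans (by norm_num) hm
  have hm60 : 60 ≤ m := le_trans (by norm_num) hm
  have hmr : (0:ℝ) < (m:ℝ) := by exact_mod_cast hm1
  have hlogm0 : 0 ≤ Real.log m := Real.log_nonneg (by exact_mod_cast hm1)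
  set S := (Finset.range (m + 1)).filter (fun p => p.Prime ∧ m < 2 * p) with hS
  -- lower bound for the log-sum
  have h1 := prime_sum_lower m hm1
  have h2 : Ach * m - (5*Real.log m + 5) ≤ psi m :=
    le_trans (chebE_bounds m hm60).1 (chebE_le_psi m)
  have h3 : psi (m/2) ≤ (6/5) * Ach * ((m:ℝ)/2) + 300 * (Real.log m + 1)^2 := by
    have ha := psi_upper (m/2)
    have hb : (6/5) * Ach * ((m/2 : ℕ) : ℝ) ≤ (6/5) * Ach * ((m:ℝ)/2) := by
      apply mul_le_mul_of_nonneg_left Nat.cast_div_le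
      have := Ach_nonneg; positivity
    have hd : ((m/2 : ℕ) : ℝ) ≤ (m:ℝ) := by exact_mod_cast Nat.div_le_self m 2
    have hc : Real.log ((m/2 : ℕ) : ℝ) ≤ Real.log m := by
      rcases Nat.eq_zero_or_pos (m/2) with hz | hp
      · rw [hz]; simpa using hlogm0
      · exact Real.log_le_log (by exact_mod_cast hp) hd
    have hc0 : 0 ≤ Real.log ((m/2 : ℕ) : ℝ) := by
      rcases Nat.eq_zero_or_pos (m/2) with hz | hp
      · rw [hz]; norm_num
      · apply Real.log_nonneg
        have : (1:ℕ) ≤ m/2 := hp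
        exact_mod_cast this
    have he : (Real.log ((m/2 : ℕ) : ℝ) + 1)^2 ≤ (Real.log m + 1)^2 := by nlinarith
    linarith
  have h4 := err_small m hm
  have h5 := delta_bound
  have hdm : (Real.log 2 / 2 + 1/100) * m ≤ (2/5) * Ach * m :=
    mul_le_mul_of_nonneg_right h5 hmr.le
  have hkey : Real.log 2 * ((m:ℝ)/2) + Real.log 2 + 1 ≤ ∑ p ∈ S, Real.log p := by
    have : psi m - psi (m/2) = Ach * m - (6/5) * Ach * ((m:ℝ)/2) + (psi m - (Ach * m - (5*Real.log m + 5))) - (psi (m/2) - ((6/5) * Ach * ((m:ℝ)/2) + 300 * (Real.log m + 1)^2)) - (5*Real.log m + 5) - 300 * (Real.log m + 1)^2 := by ring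
    nlinarith
  -- convert to the product
  have hppos : ∀ p ∈ S, (0:ℝ) < (p:ℝ) := by
    intro p hp
    rw [hS, Finset.mem_filter] at hp
    exact_mod_cast hp.2.1.pos
  have hprod : ∏ p ∈ S, (p:ℝ) = Real.exp (∑ p ∈ S, Real.log p) := by
    rw [Real.exp_sum]
    exact Finset.prod_congr rfl fun p hp => (Real.exp_log (hppos p hp)).symm
  rw [hprod]
  have hrw : (2:ℝ) ^ ((m:ℝ)/2) = Real.exp (Real.log 2 * ((m:ℝ)/2)) :=
    Real.rpow_def_of_pos (by norm_num) _
  rw [hrw]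
  set c : ℝ := Real.log 2 * ((m:ℝ)/2) with hc
  have hc0 : 0 ≤ c := by
    have : (0:ℝ) < Real.log 2 := Real.log_pos (by norm_num)
    positivity
  have hmono : Real.exp (c + 1) ≤ Real.exp (∑ p ∈ S, Real.log p) := by
    apply Real.exp_le_exp.mpr
    have hl2 : (0:ℝ) < Real.log 2 := Real.log_pos (by norm_num)
    linarith
  have he1 : (2.7182818283:ℝ) < Real.exp 1 := Real.exp_one_gt_d9
  have hec1 : 1 ≤ Real.exp c := Real.one_le_exp hc0
  have hadd : Real.exp (c + 1) = Real.exp c * Real.exp 1 := Real.exp_add c 1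
  nlinarith
end
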